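/- arXiv:1803.06117 — 6 statements merged into one kernel-verified Lean document; each statement's English description precedes it below -/
import Mathlib

section
/- Fix 0 ≤ d < k < ∞ and w ∈ (1/(k+1), 1/(d+1)). Then the equation Σ_{i=d+1}^{k+1} (w·i - 1)·x^i = 0 has a unique positive real solution ρ_w. -/
open Finset Real

-- Uniqueness: the function x ↦ x^(-1/w) * f(x) is strictly increasing on (0,∞)
lemma stmt6_unique (d k : ℕ) (hdk : d < k) (w : ℝ)
    (hw1 : 1 / ((k : ℝ) + 1) < w) (hw2 : w < 1 / ((d : ℝ) + 1))
    (x y : ℝ) (hx : 0 < x) (hxy : x < y)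
    (hfx : ∑ i ∈ Finset.Icc (d + 1) (k + 1), (w * i - 1) * x ^ i = 0)
    (hfy : ∑ i ∈ Finset.Icc (d + 1) (k + 1), (w * i - 1) * y ^ i = 0) : False := by
  have hk1 : (0:ℝ) < (k:ℝ) + 1 := by positivity
  have hd1 : (0:ℝ) < (d:ℝ) + 1 := by positivity
  have hw0 : 0 < w := lt_trans (by positivity) hw1
  have hy : 0 < y := hx.trans hxy
  set s : ℝ := 1 / w with hs
  have hs0 : 0 < s := by positivity
  -- g t = t^(-s) * f t
  have hg : ∀ t : ℝ, 0 < t →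
      ∑ i ∈ Finset.Icc (d + 1) (k + 1), (w * i - 1) * t ^ ((i:ℝ) - s)
      = (∑ i ∈ Finset.Icc (d + 1) (k + 1), (w * i - 1) * t ^ i) * t ^ (-s) := by
    intro t ht
    rw [Finset.sum_mul]
    refine Finset.sum_congr rfl fun i _ => ?_
    rw [show (i:ℝ) - s = (i:ℝ) + (-s) by ring, Real.rpow_add ht, Real.rpow_natCast]
    ring
  have hgx : ∑ i ∈ Finset.Icc (d + 1) (k + 1), (w * i - 1) * x ^ ((i:ℝ) - s) = 0 := by
    rw [hg x hx, hfx, zero_mul]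
  have hgy : ∑ i ∈ Finset.Icc (d + 1) (k + 1), (w * i - 1) * y ^ ((i:ℝ) - s) = 0 := by
    rw [hg y hy, hfy, zero_mul]
  have hlt : ∑ i ∈ Finset.Icc (d + 1) (k + 1), (w * i - 1) * x ^ ((i:ℝ) - s)
      < ∑ i ∈ Finset.Icc (d + 1) (k + 1), (w * i - 1) * y ^ ((i:ℝ) - s) := by
    have hterm : ∀ i : ℕ, w * i < 1 →
        (w * i - 1) * x ^ ((i:ℝ) - s) < (w * i - 1) * y ^ ((i:ℝ) - s) := by
      intro i hi
      have hneg : (i:ℝ) - s < 0 := by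
        have : (i:ℝ) < s := by
          rw [hs, lt_div_iff₀ hw0]
          linarith [hi]
        linarith
      have := Real.rpow_lt_rpow_of_neg hx hxy hneg
      nlinarith [this, hi]
    refine Finset.sum_lt_sum (fun i _ => ?_) ⟨d + 1, ?_, ?_⟩
    · by_cases hi : w * i < 1
      · exact (hterm i hi).le
      · push_neg at hi
        have hnn : 0 ≤ (i:ℝ) - s := by
          have : s ≤ (i:ℝ) := by
            rw [hs, div_le_iff₀ hw0]
            linarith [hi]
          linarith
        have hrp : x ^ ((i:ℝ) - s) ≤ y ^ ((i:ℝ) - s) :=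
          Real.rpow_le_rpow hx.le hxy.le hnn
        have : (0:ℝ) ≤ w * i - 1 := by linarith
        exact mul_le_mul_of_nonneg_left hrp this
    · exact Finset.mem_Icc.mpr ⟨le_refl _, by omega⟩
    · have hcast : (((d+1 : ℕ)):ℝ) = (d:ℝ) + 1 := by push_cast; ring
      have : w * ((d:ℝ)+1) < 1 := by
        rw [lt_div_iff₀ hd1] at hw2; linarith
      have := hterm (d+1) (by rw [hcast]; exact this)
      exact this
  rw [hgx, hgy] at hlt
  exact lt_irrefl 0 hlt

set_option maxHeartbeats 1000000 in
lemma stmt6_exists (d k : ℕ) (hdk : d < k) (w : ℝ)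
    (hw1 : 1 / ((k : ℝ) + 1) < w) (hw2 : w < 1 / ((d : ℝ) + 1)) :
    ∃ x : ℝ, 0 < x ∧ ∑ i ∈ Finset.Icc (d + 1) (k + 1), (w * i - 1) * x ^ i = 0 := by
  have hk1 : (0:ℝ) < (k:ℝ) + 1 := by positivity
  have hd1 : (0:ℝ) < (d:ℝ) + 1 := by positivity
  have hw0 : 0 < w := lt_trans (by positivity) hw1
  have hak : 0 < w * ((k:ℝ)+1) - 1 := by
    rw [div_lt_iff₀ hk1] at hw1; linarith
  have had : w * ((d:ℝ)+1) - 1 < 0 := by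
    rw [lt_div_iff₀ hd1] at hw2; linarith
  set M : ℝ := w * ((k:ℝ)+1) + 1 with hM
  have hM0 : 0 < M := by positivity
  have habs : ∀ i ∈ Finset.Icc (d+1) (k+1), |w * (i:ℝ) - 1| ≤ M := by
    intro i hi
    have hi2 : (i:ℝ) ≤ (k:ℝ) + 1 := by
      have := (Finset.mem_Icc.mp hi).2
      exact_mod_cast this
    have h0 : (0:ℝ) ≤ w * i := by positivity
    rw [abs_le]
    constructor <;> nlinarith
  -- small point
  set ε : ℝ := (1 - w*((d:ℝ)+1)) / (2 * M * ((k:ℝ)+1)) with hε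
  have hε0 : 0 < ε := by
    apply div_pos (by linarith) (by positivity)
  set x0 : ℝ := min 1 ε with hx0
  have hx0pos : 0 < x0 := lt_min one_pos hε0
  have hx0le1 : x0 ≤ 1 := min_le_left _ _
  have hx0leε : x0 ≤ ε := min_le_right _ _
  have hfx0 : ∑ i ∈ Finset.Icc (d + 1) (k + 1), (w * i - 1) * x0 ^ i < 0 := by
    have hmem : d + 1 ∈ Finset.Icc (d+1) (k+1) := Finset.mem_Icc.mpr ⟨le_refl _, by omega⟩
    rw [← Finset.add_sum_erase _ _ hmem, Finset.Icc_erase_left]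
    have hbound : ∑ i ∈ Finset.Ioc (d+1) (k+1), (w * i - 1) * x0 ^ i
        ≤ ((k:ℝ)+1) * (M * x0 ^ (d+2)) := by
      have h1 : ∑ i ∈ Finset.Ioc (d+1) (k+1), (w * i - 1) * x0 ^ i
          ≤ (Finset.Ioc (d+1) (k+1)).card • (M * x0 ^ (d+2)) := by
        apply Finset.sum_le_card_nsmul
        intro i hi
        have hi' : i ∈ Finset.Icc (d+1) (k+1) := by
          rw [Finset.mem_Ioc] at hi; exact Finset.mem_Icc.mpr ⟨by omega, hi.2⟩
        have h2 : d + 2 ≤ i := by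
          rw [Finset.mem_Ioc] at hi; omega
        have hxp : x0 ^ i ≤ x0 ^ (d+2) := pow_le_pow_of_le_one hx0pos.le hx0le1 h2
        calc (w * i - 1) * x0 ^ i ≤ |w * i - 1| * x0 ^ i := by
              apply mul_le_mul_of_nonneg_right (le_abs_self _) (by positivity)
          _ ≤ M * x0 ^ (d+2) := by
              apply mul_le_mul (habs i hi') hxp (by positivity) hM0.le
      refine h1.trans ?_
      rw [nsmul_eq_mul]
      apply mul_le_mul_of_nonneg_right _ (by positivity)
      have : (Finset.Ioc (d+1) (k+1)).card ≤ k + 1 := by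
        rw [Nat.card_Ioc]; omega
      exact_mod_cast this
    have hcast : (((d+1 : ℕ)):ℝ) = (d:ℝ) + 1 := by push_cast; ring
    have hkey : (w * ((d:ℝ)+1) - 1) * x0 ^ (d+1) + ((k:ℝ)+1) * (M * x0 ^ (d+2)) < 0 := by
      have hpow : (0:ℝ) < x0 ^ (d+1) := by positivity
      have hsucc : x0 ^ (d+2) = x0 ^ (d+1) * x0 := by rw [pow_succ]
      have hεb : ((k:ℝ)+1) * M * x0 ≤ (1 - w*((d:ℝ)+1)) / 2 := by
        have : ((k:ℝ)+1) * M * ε = (1 - w*((d:ℝ)+1)) / 2 := by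
          rw [hε]; field_simp
        nlinarith [mul_le_mul_of_nonneg_left hx0leε (by positivity : (0:ℝ) ≤ ((k:ℝ)+1) * M)]
      rw [hsucc]
      have h3 := mul_le_mul_of_nonneg_right hεb hpow.le
      have h4 : (w*((d:ℝ)+1)-1) * x0^(d+1) < 0 := mul_neg_of_neg_of_pos had hpow
      nlinarith [h3, h4]
    calc (w * ((d+1:ℕ):ℝ) - 1) * x0 ^ (d+1) + ∑ i ∈ Finset.Ioc (d+1) (k+1), (w * i - 1) * x0 ^ i
        ≤ (w * ((d:ℝ)+1) - 1) * x0 ^ (d+1) + ((k:ℝ)+1) * (M * x0 ^ (d+2)) := by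
          rw [hcast]; linarith [hbound]
      _ < 0 := hkey
  -- large point
  set x1 : ℝ := max 1 ((M*((k:ℝ)+1)+1)/(w*((k:ℝ)+1)-1)) with hx1
  have hx1ge1 : (1:ℝ) ≤ x1 := le_max_left _ _
  have hx1pos : 0 < x1 := lt_of_lt_of_le one_pos hx1ge1
  have hx1ge : (M*((k:ℝ)+1)+1)/(w*((k:ℝ)+1)-1) ≤ x1 := le_max_right _ _
  have hx1b : M*((k:ℝ)+1)+1 ≤ (w*((k:ℝ)+1)-1) * x1 := by
    rw [div_le_iff₀ hak] at hx1ge; linarith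
  have hfx1 : 0 < ∑ i ∈ Finset.Icc (d + 1) (k + 1), (w * i - 1) * x1 ^ i := by
    rw [Finset.sum_Icc_succ_top (by omega : d + 1 ≤ k + 1)]
    have hbound : -(((k:ℝ)+1) * (M * x1 ^ k)) ≤ ∑ i ∈ Finset.Icc (d+1) k, (w * i - 1) * x1 ^ i := by
      have h1 : (Finset.Icc (d+1) k).card • (-(M * x1 ^ k))
          ≤ ∑ i ∈ Finset.Icc (d+1) k, (w * i - 1) * x1 ^ i := by
        apply Finset.card_nsmul_le_sum
        intro i hi
        rw [Finset.mem_Icc] at hi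
        have hi' : i ∈ Finset.Icc (d+1) (k+1) := Finset.mem_Icc.mpr ⟨hi.1, by omega⟩
        have hxp : x1 ^ i ≤ x1 ^ k := pow_le_pow_right₀ hx1ge1 hi.2
        have habs' := habs i hi'
        rw [abs_le] at habs'
        have hA : -M * x1 ^ i ≤ (w * i - 1) * x1 ^ i :=
          mul_le_mul_of_nonneg_right habs'.1 (by positivity)
        have hB : M * x1 ^ i ≤ M * x1 ^ k := by nlinarith [hxp, hM0]
        linarith
      refine le_trans ?_ h1
      rw [nsmul_eq_mul]
      have hc : ((Finset.Icc (d+1) k).card : ℝ) ≤ (k:ℝ) + 1 := by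
        have : (Finset.Icc (d+1) k).card ≤ k + 1 := by rw [Nat.card_Icc]; omega
        exact_mod_cast this
      have hA : (0:ℝ) ≤ M * x1 ^ k := by positivity
      have h2 : ((Finset.Icc (d+1) k).card : ℝ) * (M * x1^k) ≤ ((k:ℝ)+1) * (M*x1^k) :=
        mul_le_mul_of_nonneg_right hc hA
      rw [mul_neg]
      linarith
    have hcast : (((k+1 : ℕ)):ℝ) = (k:ℝ) + 1 := by push_cast; ring
    have hkey : 0 < -(((k:ℝ)+1) * (M * x1 ^ k)) + (w * ((k:ℝ)+1) - 1) * x1 ^ (k+1) := by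
      have hpow : (0:ℝ) < x1 ^ k := by positivity
      have hsucc : x1 ^ (k+1) = x1 ^ k * x1 := by rw [pow_succ]
      rw [hsucc]
      nlinarith [hx1b, hpow]
    have : (w * ((k+1:ℕ):ℝ) - 1) * x1 ^ (k+1) = (w * ((k:ℝ)+1) - 1) * x1 ^ (k+1) := by
      rw [hcast]
    linarith [hbound, hkey, this.ge, this.le]
  -- IVT
  have hx01 : x0 ≤ x1 := hx0le1.trans hx1ge1
  have hcont : ContinuousOn (fun x : ℝ => ∑ i ∈ Finset.Icc (d + 1) (k + 1), (w * i - 1) * x ^ i)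
      (Set.Icc x0 x1) := by
    apply Continuous.continuousOn
    apply continuous_finset_sum
    intro i _
    continuity
  have hivt := intermediate_value_Icc hx01 hcont
  have h0mem : (0:ℝ) ∈ Set.Icc ((fun x : ℝ => ∑ i ∈ Finset.Icc (d + 1) (k + 1), (w * i - 1) * x ^ i) x0)
      ((fun x : ℝ => ∑ i ∈ Finset.Icc (d + 1) (k + 1), (w * i - 1) * x ^ i) x1) :=
    Set.mem_Icc.mpr ⟨hfx0.le, hfx1.le⟩
  obtain ⟨c, hc, hfc⟩ := hivt h0mem
  exact ⟨c, lt_of_lt_of_le hx0pos hc.1, hfc⟩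

theorem stmt6 (d k : ℕ) (hdk : d < k) (w : ℝ)
    (hw1 : 1 / ((k : ℝ) + 1) < w) (hw2 : w < 1 / ((d : ℝ) + 1)) :
    ∃! x : ℝ, 0 < x ∧ ∑ i ∈ Finset.Icc (d + 1) (k + 1), (w * i - 1) * x ^ i = 0 := by
  obtain ⟨c, hc, hfc⟩ := stmt6_exists d k hdk w hw1 hw2
  refine ⟨c, ⟨hc, hfc⟩, ?_⟩
  rintro y ⟨hy, hfy⟩
  rcases lt_trichotomy y c with h | h | h
  · exact absurd (stmt6_unique d k hdk w hw1 hw2 y c hy h hfy hfc) not_false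
  · exact h
  · exact absurd (stmt6_unique d k hdk w hw1 hw2 c y hc h hfc hfy) not_false
end

section
/- For d ≥ 0 and w ∈ (0, 1/(d+1)), the unique positive solution ρ_w of Σ_{i=d+1}^{∞} (w·i - 1)·x^i = 0 (equivalently of the corresponding finite closed form) in the case k = ∞ is ρ_w = (1 - w(d+1))/(1 - w·d). -/
lemma tail_tsum_closed (d : ℕ) (w x : ℝ) (hx0 : 0 ≤ x) (hx1 : x < 1) :
    ∑' i : ℕ, (if d + 1 ≤ i then (w * i - 1) * x ^ i else 0)
      = x ^ (d + 1) * ((w * (d + 1) - 1) + x * (1 - w * d)) / (1 - x) ^ 2 := by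
  have hnorm : ‖x‖ < 1 := by rwa [Real.norm_eq_abs, abs_of_nonneg hx0]
  have hs1 : Summable (fun i : ℕ => (i : ℝ) * x ^ i) := by
    have := summable_pow_mul_geometric_of_norm_lt_one (R := ℝ) 1 hnorm
    simpa using this
  have hs2 : Summable (fun i : ℕ => x ^ i) := summable_geometric_of_norm_lt_one hnorm
  have hsf : Summable (fun i : ℕ => (w * i - 1) * x ^ i) := by
    have h : (fun i : ℕ => (w * i - 1) * x ^ i)
        = fun i : ℕ => w * ((i : ℝ) * x ^ i) - x ^ i := by
      funext i; ring
    rw [h]; exact (hs1.mul_left w).sub hs2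
  set f : ℕ → ℝ := fun i => if d + 1 ≤ i then (w * i - 1) * x ^ i else 0 with hf
  have hsF : Summable f := by
    have h : f = Set.indicator {i : ℕ | d + 1 ≤ i} (fun i : ℕ => (w * i - 1) * x ^ i) := by
      funext i
      simp [hf, Set.indicator_apply, Set.mem_setOf_eq]
    rw [h]; exact hsf.indicator _
  have hshift := Summable.sum_add_tsum_nat_add (f := f) (d + 1) hsF
  have hfin : ∑ i ∈ Finset.range (d + 1), f i = 0 := by
    apply Finset.sum_eq_zero
    intro i hi
    simp only [Finset.mem_range] at hi
    simp [hf, Nat.not_le.mpr hi, Nat.not_lt.mpr (Nat.lt_succ_iff.mp hi)]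
  have htail : (fun i : ℕ => f (i + (d + 1)))
      = fun i : ℕ => x ^ (d + 1) * (w * ((i : ℝ) * x ^ i) + (w * (d + 1) - 1) * x ^ i) := by
    funext i
    have h1 : d + 1 ≤ i + (d + 1) := Nat.le_add_left _ _
    simp only [hf, if_pos h1]
    push_cast
    rw [pow_add]
    ring
  have hval : ∑' i : ℕ, f (i + (d + 1))
      = x ^ (d + 1) * (w * (x / (1 - x) ^ 2) + (w * (d + 1) - 1) * (1 - x)⁻¹) := by
    rw [htail]
    rw [tsum_mul_left]
    rw [Summable.tsum_add (hs1.mul_left w) (hs2.mul_left _)]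
    rw [tsum_mul_left, tsum_mul_left]
    rw [tsum_coe_mul_geometric_of_norm_lt_one hnorm, tsum_geometric_of_lt_one hx0 hx1]
  have hx1' : (1 : ℝ) - x ≠ 0 := by linarith
  have : ∑' i : ℕ, f i
      = x ^ (d + 1) * (w * (x / (1 - x) ^ 2) + (w * (d + 1) - 1) * (1 - x)⁻¹) := by
    rw [← hshift, hfin, hval, zero_add]
  rw [this]
  field_simp
  ring

theorem stmt7 (d : ℕ) (w : ℝ) (hw0 : 0 < w) (hw : w < 1 / ((d : ℝ) + 1)) :
    (0 < (1 - w * ((d : ℝ) + 1)) / (1 - w * d) ∧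
     (1 - w * ((d : ℝ) + 1)) / (1 - w * d) < 1 ∧
     ∑' i : ℕ, (if d + 1 ≤ i then (w * i - 1) * ((1 - w * ((d : ℝ) + 1)) / (1 - w * d)) ^ i else 0) = 0) ∧
    (∀ x : ℝ, 0 < x → x < 1 →
      ∑' i : ℕ, (if d + 1 ≤ i then (w * i - 1) * x ^ i else 0) = 0 →
      x = (1 - w * ((d : ℝ) + 1)) / (1 - w * d)) := by
  have hd1 : (0 : ℝ) < (d : ℝ) + 1 := by positivity
  have h1 : 0 < 1 - w * ((d : ℝ) + 1) := by
    have := (lt_div_iff₀ hd1).mp hw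
    linarith
  have h2 : 0 < 1 - w * d := by nlinarith
  set ρ : ℝ := (1 - w * ((d : ℝ) + 1)) / (1 - w * d) with hρ
  have hρ0 : 0 < ρ := div_pos h1 h2
  have hρ1 : ρ < 1 := by
    rw [hρ, div_lt_one h2]
    nlinarith
  have hρnum : (w * (d + 1) - 1) + ρ * (1 - w * d) = 0 := by
    rw [hρ, div_mul_cancel₀ _ (ne_of_gt h2)]
    ring
  constructor
  · refine ⟨hρ0, hρ1, ?_⟩
    rw [tail_tsum_closed d w ρ hρ0.le hρ1, hρnum]
    simp
  · intro x hx0 hx1 hsum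
    rw [tail_tsum_closed d w x hx0.le hx1] at hsum
    have hxne : x ^ (d + 1) ≠ 0 := pow_ne_zero _ (ne_of_gt hx0)
    have h1x : ((1 : ℝ) - x) ^ 2 ≠ 0 := pow_ne_zero _ (by linarith)
    have hnum : (w * (d + 1) - 1) + x * (1 - w * d) = 0 := by
      have := div_eq_zero_iff.mp hsum
      rcases this with h | h
      · rcases mul_eq_zero.mp h with h' | h'
        · exact absurd h' hxne
        · exact h'
      · exact absurd h h1x
    rw [hρ, eq_div_iff (ne_of_gt h2)]
    linarith
end

section
/- Fix d ≥ 0. The function σ(w) = (1 - w·d)·H(w/(1 - w·d)) on the interval (0, 1/(d+1)) is strictly concave, and it attains its unique maximum at w* = (1-ρ)/(1 + (1-ρ)·d), where ρ is the unique positive solution of 1 - x - x^{d+1} = 0; the maximal value is σ(w*) = -log₂ ρ. -/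
/-- The binary entropy function (base-2 logarithms). -/
noncomputable def binEnt (p : ℝ) : ℝ :=
  -p * Real.logb 2 p - (1 - p) * Real.logb 2 (1 - p)

/-- The exponent `σ_{d,∞}(w) = (1 - wd) H(w/(1 - wd))`. -/
noncomputable def sigmaExp (d : ℕ) (w : ℝ) : ℝ :=
  (1 - w * d) * binEnt (w / (1 - w * d))

open Real Set

noncomputable def Fn (d : ℕ) (w : ℝ) : ℝ :=
  (-(w * Real.log w) - (1 - ((d:ℝ)+1)*w) * Real.log (1 - ((d:ℝ)+1)*w)
    + (1 - (d:ℝ)*w) * Real.log (1 - (d:ℝ)*w)) / Real.log 2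

noncomputable def Gn (d : ℕ) (w : ℝ) : ℝ :=
  (-Real.log w + ((d:ℝ)+1) * Real.log (1 - ((d:ℝ)+1)*w)
    - (d:ℝ) * Real.log (1 - (d:ℝ)*w)) / Real.log 2

lemma aux_pos {d : ℕ} {w : ℝ} (hw : w ∈ Set.Ioo 0 (1 / ((d:ℝ)+1))) :
    0 < w ∧ 0 < 1 - ((d:ℝ)+1)*w ∧ 0 < 1 - (d:ℝ)*w := by
  obtain ⟨h1, h2⟩ := hw
  have hd : (0:ℝ) < (d:ℝ) + 1 := by positivity
  have h3 : ((d:ℝ)+1) * w < 1 := by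
    have := (lt_div_iff₀ hd).mp h2
    linarith
  refine ⟨h1, by linarith, ?_⟩
  nlinarith [Nat.cast_nonneg (α := ℝ) d]

lemma hasDerivAt_Fn {d : ℕ} {w : ℝ} (hw : w ∈ Set.Ioo 0 (1 / ((d:ℝ)+1))) :
    HasDerivAt (Fn d) (Gn d w) w := by
  obtain ⟨h1, h2, h3⟩ := aux_pos hw
  have c1 : HasDerivAt (fun w : ℝ => w * Real.log w) (Real.log w + 1) w :=
    Real.hasDerivAt_mul_log h1.ne'
  have u2 : HasDerivAt (fun w : ℝ => 1 - ((d:ℝ)+1)*w) (-(((d:ℝ)+1))) w := by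
    simpa using ((hasDerivAt_id w).const_mul ((d:ℝ)+1)).const_sub 1
  have u3 : HasDerivAt (fun w : ℝ => 1 - (d:ℝ)*w) (-((d:ℝ))) w := by
    simpa using ((hasDerivAt_id w).const_mul ((d:ℝ))).const_sub 1
  have c2 : HasDerivAt (fun w : ℝ => (1 - ((d:ℝ)+1)*w) * Real.log (1 - ((d:ℝ)+1)*w))
      ((Real.log (1 - ((d:ℝ)+1)*w) + 1) * (-(((d:ℝ)+1)))) w := by
    have := (Real.hasDerivAt_mul_log h2.ne').comp w u2; exact this
  have c3 : HasDerivAt (fun w : ℝ => (1 - (d:ℝ)*w) * Real.log (1 - (d:ℝ)*w))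
      ((Real.log (1 - (d:ℝ)*w) + 1) * (-((d:ℝ)))) w := by
    have := (Real.hasDerivAt_mul_log h3.ne').comp w u3; exact this
  have := (((c1.neg.sub c2).add c3).div_const (Real.log 2))
  refine HasDerivAt.congr_deriv this ?_
  unfold Gn
  ring

lemma hasDerivAt_Gn {d : ℕ} {w : ℝ} (hw : w ∈ Set.Ioo 0 (1 / ((d:ℝ)+1))) :
    HasDerivAt (Gn d)
      ((-(1/w) - ((d:ℝ)+1)^2/(1 - ((d:ℝ)+1)*w) + (d:ℝ)^2/(1 - (d:ℝ)*w)) / Real.log 2) w := by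
  obtain ⟨h1, h2, h3⟩ := aux_pos hw
  have c1 : HasDerivAt (fun w : ℝ => Real.log w) w⁻¹ w := Real.hasDerivAt_log h1.ne'
  have u2 : HasDerivAt (fun w : ℝ => 1 - ((d:ℝ)+1)*w) (-(((d:ℝ)+1))) w := by
    simpa using ((hasDerivAt_id w).const_mul ((d:ℝ)+1)).const_sub 1
  have u3 : HasDerivAt (fun w : ℝ => 1 - (d:ℝ)*w) (-((d:ℝ))) w := by
    simpa using ((hasDerivAt_id w).const_mul ((d:ℝ))).const_sub 1
  have c2 : HasDerivAt (fun w : ℝ => Real.log (1 - ((d:ℝ)+1)*w))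
      ((1 - ((d:ℝ)+1)*w)⁻¹ * (-(((d:ℝ)+1)))) w := by
    have := (Real.hasDerivAt_log h2.ne').comp w u2; exact this
  have c3 : HasDerivAt (fun w : ℝ => Real.log (1 - (d:ℝ)*w))
      ((1 - (d:ℝ)*w)⁻¹ * (-((d:ℝ)))) w := by
    have := (Real.hasDerivAt_log h3.ne').comp w u3; exact this
  have := ((c1.neg.add (c2.const_mul ((d:ℝ)+1))).sub (c3.const_mul ((d:ℝ)))).div_const (Real.log 2)
  refine HasDerivAt.congr_deriv this ?_
  field_simp
  ring

lemma Gn_deriv_neg {d : ℕ} {w : ℝ} (hw : w ∈ Set.Ioo 0 (1 / ((d:ℝ)+1))) :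
    (-(1/w) - ((d:ℝ)+1)^2/(1 - ((d:ℝ)+1)*w) + (d:ℝ)^2/(1 - (d:ℝ)*w)) / Real.log 2 < 0 := by
  obtain ⟨h1, h2, h3⟩ := aux_pos hw
  apply div_neg_of_neg_of_pos _ (Real.log_pos (by norm_num))
  have hle : (d:ℝ)^2/(1 - (d:ℝ)*w) ≤ (d:ℝ)^2/(1 - ((d:ℝ)+1)*w) :=
    div_le_div_of_nonneg_left (by positivity) h2 (by linarith)
  have hlt : (d:ℝ)^2/(1 - ((d:ℝ)+1)*w) < ((d:ℝ)+1)^2/(1 - ((d:ℝ)+1)*w) := by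
    rw [div_lt_div_iff₀ h2 h2]
    nlinarith [Nat.cast_nonneg (α := ℝ) d]
  have : 0 < 1/w := by positivity
  linarith

lemma Gn_strictAnti (d : ℕ) : StrictAntiOn (Gn d) (Set.Ioo 0 (1 / ((d:ℝ)+1))) := by
  apply strictAntiOn_of_deriv_neg (convex_Ioo _ _)
  · intro x hx
    exact (hasDerivAt_Gn hx).differentiableAt.continuousAt.continuousWithinAt
  · rw [interior_Ioo]
    intro x hx
    rw [(hasDerivAt_Gn hx).deriv]
    exact Gn_deriv_neg hx

lemma strictConcave_Fn (d : ℕ) :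
    StrictConcaveOn ℝ (Set.Ioo 0 (1 / ((d:ℝ)+1))) (Fn d) := by
  apply StrictAntiOn.strictConcaveOn_of_deriv (convex_Ioo _ _)
  · intro x hx
    exact (hasDerivAt_Fn hx).differentiableAt.continuousAt.continuousWithinAt
  · rw [interior_Ioo]
    intro x hx y hy hxy
    rw [(hasDerivAt_Fn hx).deriv, (hasDerivAt_Fn hy).deriv]
    exact Gn_strictAnti d hx hy hxy

lemma strictConcaveOn_congr {s : Set ℝ} {f g : ℝ → ℝ} (h : StrictConcaveOn ℝ s f)
    (he : ∀ x ∈ s, f x = g x) : StrictConcaveOn ℝ s g := by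
  refine ⟨h.1, fun x hx y hy hxy a b ha hb hab => ?_⟩
  rw [← he x hx, ← he y hy, ← he _ (h.1 hx hy ha.le hb.le hab)]
  exact h.2 hx hy hxy ha hb hab

lemma sigma_eq_Fn {d : ℕ} {w : ℝ} (hw : w ∈ Set.Ioo 0 (1 / ((d:ℝ)+1))) :
    sigmaExp d w = Fn d w := by
  obtain ⟨h1, h2, h3⟩ := aux_pos hw
  have hl2 : Real.log 2 ≠ 0 := ne_of_gt (Real.log_pos one_lt_two)
  unfold sigmaExp binEnt Fn
  rw [mul_comm w (d:ℝ)]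
  have h1p : 1 - w/(1-(d:ℝ)*w) = (1 - ((d:ℝ)+1)*w)/(1-(d:ℝ)*w) := by
    have : 1 - w * (d:ℝ) ≠ 0 := by rw [mul_comm]; exact h3.ne'
    field_simp; ring
  rw [h1p]
  simp only [Real.logb]
  rw [Real.log_div h1.ne' h3.ne', Real.log_div h2.ne' h3.ne']
  field_simp
  ring

section Rho
variable {d : ℕ} {ρ : ℝ}

lemma rho_facts (hρ : 0 < ρ) (hroot : 1 - ρ - ρ ^ (d + 1) = 0) : ρ < 1 ∧ 0 < 1 + (1-ρ)*(d:ℝ) := by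
  have hp : 0 < ρ ^ (d+1) := pow_pos hρ _
  have h1 : ρ < 1 := by nlinarith
  have h2 : (0:ℝ) ≤ (1-ρ)*(d:ℝ) := mul_nonneg (by linarith) (Nat.cast_nonneg d)
  exact ⟨h1, by linarith⟩

lemma W_mem (hρ : 0 < ρ) (hroot : 1 - ρ - ρ ^ (d + 1) = 0) : (1 - ρ) / (1 + (1 - ρ) * d) ∈ Set.Ioo (0:ℝ) (1 / ((d:ℝ)+1)) := by
  obtain ⟨h1, hD⟩ := rho_facts hρ hroot
  constructor
  · exact div_pos (by linarith) hD
  · rw [div_lt_div_iff₀ hD (by positivity)]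
    nlinarith

lemma sigma_at_W (hρ : 0 < ρ) (hroot : 1 - ρ - ρ ^ (d + 1) = 0) : sigmaExp d ((1 - ρ) / (1 + (1 - ρ) * d)) = -Real.logb 2 ρ := by
  obtain ⟨h1, hD⟩ := rho_facts hρ hroot
  have hpow : ρ ^ (d+1) = 1 - ρ := by linarith
  set W : ℝ := (1 - ρ) / (1 + (1 - ρ) * d) with hWdef
  have h1W : 1 - W * (d:ℝ) = 1 / (1 + (1 - ρ) * d) := by
    rw [hWdef]; field_simp; try ring
  have hpW : W / (1 - W * (d:ℝ)) = 1 - ρ := by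
    rw [h1W, hWdef]; field_simp
  unfold sigmaExp binEnt
  rw [hpW, h1W, show (1:ℝ) - (1 - ρ) = ρ by ring, ← hpow, Real.logb_pow, hpow]
  have hL : Real.logb 2 ρ = Real.logb 2 ρ := rfl
  field_simp
  push_cast
  ring

lemma Gn_at_W (hρ : 0 < ρ) (hroot : 1 - ρ - ρ ^ (d + 1) = 0) : Gn d ((1 - ρ) / (1 + (1 - ρ) * d)) = 0 := by
  obtain ⟨h1, hD⟩ := rho_facts hρ hroot
  have hpow : ρ ^ (d+1) = 1 - ρ := by linarith
  set W : ℝ := (1 - ρ) / (1 + (1 - ρ) * d) with hWdef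
  have hW2 : 1 - (d:ℝ) * W = 1 / (1 + (1 - ρ) * d) := by
    have : 1 + (d:ℝ) * (1 - ρ) ≠ 0 := by rw [mul_comm]; exact hD.ne'
    rw [hWdef]; field_simp; try ring
  have hW3 : 1 - ((d:ℝ)+1) * W = ρ / (1 + (1 - ρ) * d) := by
    have : 1 + (d:ℝ) * (1 - ρ) ≠ 0 := by rw [mul_comm]; exact hD.ne'
    rw [hWdef]; field_simp; try ring
  have hWpow : W = ρ ^ (d+1) / (1 + (1 - ρ) * d) := by rw [hWdef, hpow]
  unfold Gn
  rw [hW2, hW3, hWpow, Real.log_div (pow_ne_zero _ hρ.ne') hD.ne',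
    Real.log_div hρ.ne' hD.ne', one_div, Real.log_inv, Real.log_pow]
  rw [div_eq_zero_iff]
  left
  push_cast
  ring

end Rho

theorem stmt10 (d : ℕ) :
    StrictConcaveOn ℝ (Set.Ioo 0 (1 / ((d : ℝ) + 1))) (sigmaExp d) ∧
    (∀ ρ : ℝ, 0 < ρ → 1 - ρ - ρ ^ (d + 1) = 0 →
      sigmaExp d ((1 - ρ) / (1 + (1 - ρ) * d)) = -Real.logb 2 ρ ∧
      (1 - ρ) / (1 + (1 - ρ) * d) ∈ Set.Ioo (0 : ℝ) (1 / ((d : ℝ) + 1)) ∧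
      ∀ w ∈ Set.Ioo (0 : ℝ) (1 / ((d : ℝ) + 1)),
        w ≠ (1 - ρ) / (1 + (1 - ρ) * d) →
        sigmaExp d w < sigmaExp d ((1 - ρ) / (1 + (1 - ρ) * d))) := by
  constructor
  · exact strictConcaveOn_congr (strictConcave_Fn d) (fun x hx => (sigma_eq_Fn hx).symm)
  · intro ρ hρ hroot
    refine ⟨sigma_at_W hρ hroot, W_mem hρ hroot, ?_⟩
    intro w hw hne
    set W : ℝ := (1 - ρ) / (1 + (1 - ρ) * d) with hWdef
    have hWmem : W ∈ Set.Ioo (0:ℝ) (1 / ((d:ℝ)+1)) := W_mem hρ hroot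
    have hGW : Gn d W = 0 := Gn_at_W hρ hroot
    rw [sigma_eq_Fn hw, sigma_eq_Fn hWmem]
    rcases lt_or_gt_of_ne hne with hlt | hgt
    · -- w < W : Fn strictly increasing on [w, W]
      have hsub : Set.Icc w W ⊆ Set.Ioo (0:ℝ) (1 / ((d:ℝ)+1)) :=
        Set.Icc_subset_Ioo hw.1 hWmem.2
      have hmono : StrictMonoOn (Fn d) (Set.Icc w W) := by
        apply strictMonoOn_of_deriv_pos (convex_Icc _ _)
        · intro x hx
          exact (hasDerivAt_Fn (hsub hx)).differentiableAt.continuousAt.continuousWithinAt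
        · rw [interior_Icc]
          intro x hx
          have hxI : x ∈ Set.Ioo (0:ℝ) (1 / ((d:ℝ)+1)) := hsub (Set.Ioo_subset_Icc_self hx)
          rw [(hasDerivAt_Fn hxI).deriv]
          have := Gn_strictAnti d hxI hWmem hx.2
          linarith [hGW ▸ this]
      exact hmono (Set.left_mem_Icc.2 hlt.le) (Set.right_mem_Icc.2 hlt.le) hlt
    · -- W < w : Fn strictly decreasing on [W, w]
      have hsub : Set.Icc W w ⊆ Set.Ioo (0:ℝ) (1 / ((d:ℝ)+1)) :=
        Set.Icc_subset_Ioo hWmem.1 hw.2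
      have hanti : StrictAntiOn (Fn d) (Set.Icc W w) := by
        apply strictAntiOn_of_deriv_neg (convex_Icc _ _)
        · intro x hx
          exact (hasDerivAt_Fn (hsub hx)).differentiableAt.continuousAt.continuousWithinAt
        · rw [interior_Icc]
          intro x hx
          have hxI : x ∈ Set.Ioo (0:ℝ) (1 / ((d:ℝ)+1)) := hsub (Set.Ioo_subset_Icc_self hx)
          rw [(hasDerivAt_Fn hxI).deriv]
          have := Gn_strictAnti d hWmem hxI hx.1
          linarith [hGW ▸ this]
      exact hanti (Set.left_mem_Icc.2 hgt.le) (Set.right_mem_Icc.2 hgt.le) hgt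
end

section
/- The number of points in the ball of radius r around any point of Z^m in the asymmetric distance d_a equals Σ_i C(m,i)·C(r,i)·C(r+m-i, m-i). -/
open Finset

section AuxCounting

variable {ι : Type*} [Fintype ι] [DecidableEq ι]

/-- Functions supported on `s` with sum at most `r`. -/
def WFs (s : Finset ι) (r : ℕ) : Finset (ι → ℕ) :=
  (Fintype.piFinset fun _ => Finset.range (r+1)).filter
    fun f => (∀ i, i ∉ s → f i = 0) ∧ ∑ i ∈ s, f i ≤ r

lemma mem_WFs {s : Finset ι} {r : ℕ} {f : ι → ℕ} :
    f ∈ WFs s r ↔ (∀ i, i ∉ s → f i = 0) ∧ ∑ i ∈ s, f i ≤ r := by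
  simp only [WFs, Finset.mem_filter, Fintype.mem_piFinset, Finset.mem_range]
  refine ⟨fun h => h.2, fun h => ⟨fun i => ?_, h⟩⟩
  by_cases hi : i ∈ s
  · have := Finset.single_le_sum (f := f) (fun j _ => Nat.zero_le _) hi
    omega
  · have := h.1 i hi; omega

lemma card_WFs (s : Finset ι) (r : ℕ) : (WFs s r).card = (r + s.card).choose s.card := by
  induction s using Finset.induction generalizing r with
  | empty =>
    have he : (WFs (∅ : Finset ι) r) = {0} := by
      ext g; simp [mem_WFs, funext_iff]
    rw [he]
    simp
  | @insert a s ha ih =>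
    rw [Finset.card_eq_sum_card_fiberwise (f := fun f => f a) (t := Finset.range (r+1))
      (fun f hf => by
        rw [Finset.mem_coe, mem_WFs] at hf
        have := Finset.single_le_sum (f := f) (fun j _ => Nat.zero_le _)
          (Finset.mem_insert_self a s)
        simp only [Finset.mem_coe, Finset.mem_range]; omega)]
    have key : ∀ t ∈ Finset.range (r+1),
        ((WFs (insert a s) r).filter fun f => f a = t).card = (WFs s (r - t)).card := by
      intro t ht
      rw [Finset.mem_range] at ht
      apply Finset.card_nbij' (i := fun f => Function.update f a 0)
        (j := fun g => Function.update g a t)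
      · intro f hf
        simp only [Finset.mem_coe, Finset.mem_filter, mem_WFs] at hf ⊢
        obtain ⟨⟨h1, h2⟩, h3⟩ := hf
        rw [Finset.sum_insert ha] at h2
        constructor
        · intro i hi
          by_cases hia : i = a
          · subst hia; simp [Function.update]
          · rw [Function.update_of_ne hia]
            exact h1 i (by simp [hia, hi])
        · have hsum : ∑ i ∈ s, Function.update f a 0 i = ∑ i ∈ s, f i :=
            Finset.sum_congr rfl fun i hi =>
              Function.update_of_ne (by rintro rfl; exact ha hi) _ _
          omega
      · intro g hg
        simp only [Finset.mem_coe, Finset.mem_filter, mem_WFs] at hg ⊢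
        obtain ⟨h1, h2⟩ := hg
        have hgs : ∑ i ∈ s, Function.update g a t i = ∑ i ∈ s, g i :=
          Finset.sum_congr rfl fun i hi =>
            Function.update_of_ne (by rintro rfl; exact ha hi) _ _
        refine ⟨⟨fun i hi => ?_, ?_⟩, by simp⟩
        · rw [Function.update_of_ne (by rintro rfl; exact hi (Finset.mem_insert_self _ _))]
          exact h1 i (fun h => hi (Finset.mem_insert_of_mem h))
        · rw [Finset.sum_insert ha, hgs]
          simp only [Function.update_self]
          omega
      · intro f hf
        simp only [Finset.mem_coe, Finset.mem_filter, mem_WFs] at hf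
        funext i
        by_cases hia : i = a
        · subst hia; simp [hf.2]
        · simp [Function.update_of_ne hia]
      · intro g hg
        rw [Finset.mem_coe, mem_WFs] at hg
        funext i
        by_cases hia : i = a
        · subst hia
          simp [hg.1 _ ha]
        · simp [Function.update_of_ne hia]
    rw [Finset.sum_congr rfl key]
    have h1 : ∀ t ∈ Finset.range (r+1), (WFs s (r - t)).card = (r - t + s.card).choose s.card :=
      fun t _ => ih _
    rw [Finset.sum_congr rfl h1]
    have hrefl : ∑ x ∈ Finset.range (r+1), (r - x + s.card).choose s.card
        = ∑ j ∈ Finset.range (r+1), (j + s.card).choose s.card := by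
      rw [← Finset.sum_range_reflect (fun j => (j + s.card).choose s.card) (r+1)]
      refine Finset.sum_congr rfl fun j hj => ?_
      rw [Finset.mem_range] at hj
      rw [show r - j + s.card = r + 1 - 1 - j + s.card by omega]
    rw [hrefl, Finset.card_insert_of_notMem ha]
    have hick := Nat.sum_Icc_choose (r + s.card) s.card
    rw [show r + (s.card+1) = r + s.card + 1 by omega, ← hick]
    rw [show Finset.Icc s.card (r + s.card) = (Finset.range (r+1)).map
      ⟨fun j => j + s.card, add_left_injective s.card⟩ from ?_]
    · rw [Finset.sum_map]
      simp only [Function.Embedding.coeFn_mk]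
    · ext x
      simp only [Finset.mem_Icc, Finset.mem_map, Finset.mem_range, Function.Embedding.coeFn_mk]
      constructor
      · rintro ⟨hx1, hx2⟩; exact ⟨x - s.card, by omega, by omega⟩
      · rintro ⟨j, hj, rfl⟩; omega

/-- Functions supported on `s`, positive on `s`, with sum at most `r`. -/
def VFs (s : Finset ι) (r : ℕ) : Finset (ι → ℕ) :=
  (Fintype.piFinset fun _ => Finset.range (r+1)).filter
    fun f => (∀ i, i ∉ s → f i = 0) ∧ (∀ i ∈ s, 1 ≤ f i) ∧ ∑ i ∈ s, f i ≤ r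

lemma mem_VFs {s : Finset ι} {r : ℕ} {f : ι → ℕ} :
    f ∈ VFs s r ↔ (∀ i, i ∉ s → f i = 0) ∧ (∀ i ∈ s, 1 ≤ f i) ∧ ∑ i ∈ s, f i ≤ r := by
  simp only [VFs, Finset.mem_filter, Fintype.mem_piFinset, Finset.mem_range]
  refine ⟨fun h => h.2, fun h => ⟨fun i => ?_, h⟩⟩
  by_cases hi : i ∈ s
  · have := Finset.single_le_sum (f := f) (fun j _ => Nat.zero_le _) hi
    have := h.2.2
    omega
  · have := h.1 i hi; omega

lemma card_VFs (s : Finset ι) (r : ℕ) : (VFs s r).card = r.choose s.card := by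
  by_cases hrs : s.card ≤ r
  · have hbij : (VFs s r).card = (WFs s (r - s.card)).card := by
      apply Finset.card_nbij' (i := fun f x => if x ∈ s then f x - 1 else 0)
        (j := fun g x => if x ∈ s then g x + 1 else 0)
      · intro f hf
        rw [Finset.mem_coe, mem_VFs] at hf
        obtain ⟨h1, h2, h3⟩ := hf
        rw [Finset.mem_coe, mem_WFs]
        refine ⟨fun i hi => by simp [hi], ?_⟩
        have hc : ∑ x ∈ s, ((f x - 1) + 1) = ∑ x ∈ s, f x :=
          Finset.sum_congr rfl fun x hx => by have := h2 x hx; omega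
        rw [Finset.sum_add_distrib, Finset.sum_const, smul_eq_mul, mul_one] at hc
        have he : ∑ x ∈ s, (if x ∈ s then f x - 1 else 0) = ∑ x ∈ s, (f x - 1) :=
          Finset.sum_congr rfl fun x hx => by simp [hx]
        rw [he]
        omega
      · intro g hg
        rw [Finset.mem_coe, mem_WFs] at hg
        obtain ⟨h1, h2⟩ := hg
        rw [Finset.mem_coe, mem_VFs]
        refine ⟨fun i hi => by simp [hi], fun i hi => by simp [hi], ?_⟩
        have he : ∑ x ∈ s, (if x ∈ s then g x + 1 else 0) = ∑ x ∈ s, (g x + 1) :=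
          Finset.sum_congr rfl fun x hx => by simp [hx]
        rw [he, Finset.sum_add_distrib, Finset.sum_const, smul_eq_mul, mul_one]
        omega
      · intro f hf
        rw [Finset.mem_coe, mem_VFs] at hf
        funext x
        by_cases hx : x ∈ s
        · have := hf.2.1 x hx
          simp [hx]
          omega
        · simp [hx, hf.1 x hx]
      · intro g hg
        rw [Finset.mem_coe, mem_WFs] at hg
        funext x
        by_cases hx : x ∈ s
        · simp [hx]
        · simp [hx, hg.1 x hx]
    rw [hbij, card_WFs]
    congr 1
    omega
  · have hempty : VFs s r = ∅ := by
      rw [Finset.eq_empty_iff_forall_notMem]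
      intro f hf
      rw [mem_VFs] at hf
      have h2 : s.card ≤ ∑ i ∈ s, f i := by
        simpa using Finset.card_nsmul_le_sum s f 1 hf.2.1
      have := hf.2.2
      omega
    rw [hempty, Finset.card_empty, Nat.choose_eq_zero_of_lt (by omega)]

end AuxCounting

/-- The asymmetric distance on `ℤ^m`. -/
def da (m : ℕ) (x y : Fin m → ℤ) : ℤ :=
  max (∑ i, max (x i - y i) 0) (∑ i, max (y i - x i) 0)

theorem stmt14 (m r : ℕ) (x : Fin m → ℤ) :
    Set.ncard {y : Fin m → ℤ | da m x y ≤ (r : ℤ)} =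
      ∑ i ∈ Finset.range (m + 1),
        Nat.choose m i * Nat.choose r i * Nat.choose (r + m - i) (m - i) := by
  classical
  -- Step 1: reduce to center 0
  have htrans : ∀ z : Fin m → ℤ, da m x (x + z) = da m 0 z := by
    intro z
    unfold da
    congr 1 <;> refine Finset.sum_congr rfl fun i _ => ?_ <;> congr 1 <;>
      simp only [Pi.add_apply, Pi.zero_apply] <;> ring
  have himg : {y : Fin m → ℤ | da m x y ≤ (r : ℤ)} =
      (fun z => x + z) '' {z : Fin m → ℤ | da m 0 z ≤ (r : ℤ)} := by
    ext y
    simp only [Set.mem_setOf_eq, Set.mem_image]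
    constructor
    · intro hy
      exact ⟨y - x, by rw [← htrans (y - x)]; simpa using hy, by abel⟩
    · rintro ⟨z, hz, rfl⟩
      rw [htrans]
      exact hz
  rw [himg, Set.ncard_image_of_injective _ (add_right_injective x)]
  -- Step 2: the ball at 0 is an explicit finset
  set B : Finset (Fin m → ℤ) :=
    (Fintype.piFinset fun _ => Finset.Icc (-(r:ℤ)) (r:ℤ)).filter
      fun z => (∑ i, max (z i) 0) ≤ (r:ℤ) ∧ (∑ i, max (-(z i)) 0) ≤ (r:ℤ) with hB
  have memB : ∀ z : Fin m → ℤ,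
      z ∈ B ↔ (∑ i, max (z i) 0) ≤ (r:ℤ) ∧ (∑ i, max (-(z i)) 0) ≤ (r:ℤ) := by
    intro z
    rw [hB]
    simp only [Finset.mem_filter, Fintype.mem_piFinset, Finset.mem_Icc]
    refine ⟨fun h => h.2, fun h => ⟨fun i => ?_, h⟩⟩
    have h1 : max (z i) 0 ≤ ∑ j, max (z j) 0 :=
      Finset.single_le_sum (f := fun j => max (z j) 0)
        (fun j _ => le_max_right _ _) (Finset.mem_univ i)
    have h2 : max (-(z i)) 0 ≤ ∑ j, max (-(z j)) 0 :=
      Finset.single_le_sum (f := fun j => max (-(z j)) 0)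
        (fun j _ => le_max_right _ _) (Finset.mem_univ i)
    have hzi : z i ≤ (r:ℤ) := le_trans (le_trans (le_max_left _ _) h1) h.1
    have hzi' : -(z i) ≤ (r:ℤ) := le_trans (le_trans (le_max_left _ _) h2) h.2
    omega
  have hset : {z : Fin m → ℤ | da m 0 z ≤ (r : ℤ)} = ↑B := by
    ext z
    simp only [Set.mem_setOf_eq, Finset.coe_filter, Finset.mem_coe, memB]
    unfold da
    rw [max_le_iff]
    have e1 : ∑ i, max ((0 : Fin m → ℤ) i - z i) 0 = ∑ i, max (-(z i)) 0 :=
      Finset.sum_congr rfl fun i _ => by simp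
    have e2 : ∑ i, max (z i - (0 : Fin m → ℤ) i) 0 = ∑ i, max (z i) 0 :=
      Finset.sum_congr rfl fun i _ => by simp
    rw [e1, e2, and_comm]
  rw [hset, Set.ncard_coe_finset]
  -- Step 3: partition by sign pattern
  rw [Finset.card_eq_sum_card_fiberwise
    (f := fun z => Finset.univ.filter fun i => z i < 0)
    (t := (Finset.univ : Finset (Fin m)).powerset)
    (fun z _ => by simp)]
  -- Step 4: fiber cardinality
  have hfiber : ∀ S ∈ (Finset.univ : Finset (Fin m)).powerset,
      (B.filter fun z => (Finset.univ.filter fun i => z i < 0) = S).card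
        = r.choose S.card * (r + (m - S.card)).choose (m - S.card) := by
    intro S _
    have hcc : Sᶜ.card = m - S.card := by
      rw [Finset.card_compl, Fintype.card_fin]
    have hprod : (B.filter fun z => (Finset.univ.filter fun i => z i < 0) = S).card
        = ((VFs S r) ×ˢ (WFs Sᶜ r)).card := by
      apply Finset.card_nbij'
        (i := fun (z : Fin m → ℤ) =>
          (((fun i => (-(z i)).toNat, fun i => (z i).toNat)) : (Fin m → ℕ) × (Fin m → ℕ)))
        (j := fun (p : (Fin m → ℕ) × (Fin m → ℕ)) => fun i => ((p.2 i : ℤ) - (p.1 i : ℤ)))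
      · intro z hz
        rw [Finset.mem_coe, Finset.mem_filter, memB] at hz
        obtain ⟨⟨h1, h2⟩, hfz⟩ := hz
        have hsgn : ∀ i, i ∈ S ↔ z i < 0 := by
          intro i
          rw [← hfz]
          simp
        rw [Finset.mem_coe, Finset.mem_product]
        dsimp only
        constructor
        · rw [mem_VFs]
          refine ⟨fun i hi => ?_, fun i hi => ?_, ?_⟩
          · have := (hsgn i).not.mp hi
            omega
          · have := (hsgn i).mp hi
            omega
          · have key : (↑(∑ i ∈ S, (-(z i)).toNat) : ℤ) ≤ (r : ℤ) := by
              push_cast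
              have e1 : ∑ i ∈ S, ((-(z i)).toNat : ℤ) = ∑ i ∈ S, max (-(z i)) 0 :=
                Finset.sum_congr rfl fun i _ => Int.toNat_eq_max _
              have e2 : ∑ i ∈ S, max (-(z i)) 0 ≤ ∑ i : Fin m, max (-(z i)) 0 :=
                Finset.sum_le_sum_of_subset_of_nonneg (Finset.subset_univ S)
                  (fun i _ _ => le_max_right _ _)
              exact le_trans (le_of_eq e1) (le_trans e2 h2)
            exact_mod_cast key
        · rw [mem_WFs]
          refine ⟨fun i hi => ?_, ?_⟩
          · rw [Finset.mem_compl, not_not] at hi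
            have := (hsgn i).mp hi
            omega
          · have key : (↑(∑ i ∈ Sᶜ, (z i).toNat) : ℤ) ≤ (r : ℤ) := by
              push_cast
              have e1 : ∑ i ∈ Sᶜ, ((z i).toNat : ℤ) = ∑ i ∈ Sᶜ, max (z i) 0 :=
                Finset.sum_congr rfl fun i _ => Int.toNat_eq_max _
              have e2 : ∑ i ∈ Sᶜ, max (z i) 0 ≤ ∑ i : Fin m, max (z i) 0 :=
                Finset.sum_le_sum_of_subset_of_nonneg (Finset.subset_univ Sᶜ)
                  (fun i _ _ => le_max_right _ _)
              exact le_trans (le_of_eq e1) (le_trans e2 h1)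
            exact_mod_cast key
      · rintro ⟨f, g⟩ hp
        rw [Finset.mem_coe, Finset.mem_product, mem_VFs, mem_WFs] at hp
        obtain ⟨⟨hf1, hf2, hf3⟩, hg1, hg3⟩ := hp
        simp only at hf1 hf2 hf3 hg1 hg3
        have hgS : ∀ i ∈ S, g i = 0 := fun i hi => hg1 i (by simpa using hi)
        rw [Finset.mem_coe, Finset.mem_filter, memB]
        refine ⟨⟨?_, ?_⟩, ?_⟩
        · -- sum of positive parts
          have h0 : ∀ i ∈ (Finset.univ : Finset (Fin m)), i ∉ Sᶜ →
              max ((g i : ℤ) - (f i : ℤ)) 0 = 0 := by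
            intro i _ hi
            rw [Finset.mem_compl, not_not] at hi
            rw [hgS i hi]
            push_cast
            rw [zero_sub]
            exact max_eq_right (neg_nonpos.mpr (Nat.cast_nonneg _))
          rw [show (∑ i, max ((g i : ℤ) - (f i : ℤ)) 0)
              = ∑ i ∈ Sᶜ, max ((g i : ℤ) - (f i : ℤ)) 0 from
            (Finset.sum_subset (Finset.subset_univ Sᶜ) h0).symm]
          have e : ∑ i ∈ Sᶜ, max ((g i : ℤ) - (f i : ℤ)) 0 = ∑ i ∈ Sᶜ, (g i : ℤ) := by
            refine Finset.sum_congr rfl fun i hi => ?_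
            rw [Finset.mem_compl] at hi
            rw [hf1 i hi]
            push_cast
            rw [sub_zero]
            exact max_eq_left (Nat.cast_nonneg _)
          rw [e, show (∑ i ∈ Sᶜ, (g i : ℤ)) = ((∑ i ∈ Sᶜ, g i : ℕ) : ℤ) by push_cast; rfl]
          exact_mod_cast hg3
        · -- sum of negative parts
          have h0 : ∀ i ∈ (Finset.univ : Finset (Fin m)), i ∉ S →
              max (-((g i : ℤ) - (f i : ℤ))) 0 = 0 := by
            intro i _ hi
            rw [hf1 i hi]
            push_cast
            rw [sub_zero]
            exact max_eq_right (neg_nonpos.mpr (Nat.cast_nonneg _))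
          rw [show (∑ i, max (-((g i : ℤ) - (f i : ℤ))) 0)
              = ∑ i ∈ S, max (-((g i : ℤ) - (f i : ℤ))) 0 from
            (Finset.sum_subset (Finset.subset_univ S) h0).symm]
          have e : ∑ i ∈ S, max (-((g i : ℤ) - (f i : ℤ))) 0 = ∑ i ∈ S, (f i : ℤ) := by
            refine Finset.sum_congr rfl fun i hi => ?_
            rw [hgS i hi]
            push_cast
            rw [zero_sub, neg_neg]
            exact max_eq_left (Nat.cast_nonneg _)
          rw [e, show (∑ i ∈ S, (f i : ℤ)) = ((∑ i ∈ S, f i : ℕ) : ℤ) by push_cast; rfl]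
          exact_mod_cast hf3
        · -- sign pattern
          ext i
          simp only [Finset.mem_filter, Finset.mem_univ, true_and]
          by_cases hi : i ∈ S
          · have h1 := hf2 i hi
            have h2 := hgS i hi
            simp only [hi, iff_true]
            omega
          · have h1 := hf1 i hi
            simp only [hi, iff_false, not_lt]
            omega
      · intro z hz
        funext i
        simp only
        omega
      · rintro ⟨f, g⟩ hp
        rw [Finset.mem_coe, Finset.mem_product, mem_VFs, mem_WFs] at hp
        obtain ⟨⟨hf1, hf2, hf3⟩, hg1, hg3⟩ := hp
        simp only at hf1 hf2 hf3 hg1 hg3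
        have hgS : ∀ i ∈ S, g i = 0 := fun i hi => hg1 i (by simpa using hi)
        rw [Prod.ext_iff]
        constructor <;> funext i <;> simp only <;> by_cases hi : i ∈ S
        · have := hgS i hi
          omega
        · have := hf1 i hi
          omega
        · have := hgS i hi
          omega
        · have := hf1 i hi
          omega
    rw [hprod, Finset.card_product, card_VFs, card_WFs, hcc]
  rw [Finset.sum_congr rfl hfiber]
  -- Step 6: group subsets by cardinality
  rw [Finset.sum_powerset]
  rw [Finset.card_univ, Fintype.card_fin]
  refine Finset.sum_congr rfl fun j hj => ?_
  rw [Finset.mem_range] at hj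
  have : ∀ t ∈ Finset.powersetCard j (Finset.univ : Finset (Fin m)),
      r.choose t.card * (r + (m - t.card)).choose (m - t.card)
        = r.choose j * (r + (m - j)).choose (m - j) := by
    intro t ht
    rw [(Finset.mem_powersetCard.1 ht).2]
  rw [Finset.sum_congr rfl this, Finset.sum_const, Finset.card_powersetCard,
    Finset.card_univ, Fintype.card_fin, smul_eq_mul]
  rw [show r + m - j = r + (m - j) by omega]
  ring
end

section
/- The number of points in the ball of radius r around any point of Z^m in the Manhattan (ℓ1) distance equals Σ_i 2^i·C(m,i)·C(r,i). -/
open Finset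

noncomputable def ballF (m r : ℕ) : Finset (Fin m → ℤ) :=
  (Finset.Icc (fun _ => -(r:ℤ)) (fun _ => (r:ℤ))).filter (fun z => ∑ i, (z i).natAbs ≤ r)

lemma mem_ballF {m r : ℕ} {z : Fin m → ℤ} : z ∈ ballF m r ↔ ∑ i, (z i).natAbs ≤ r := by
  constructor
  · exact fun h => (Finset.mem_filter.1 h).2
  · intro h
    have key : ∀ i, (z i).natAbs ≤ r := fun i => le_trans
      (Finset.single_le_sum (f := fun j => (z j).natAbs) (fun j _ => Nat.zero_le _)
        (Finset.mem_univ i)) h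
    exact Finset.mem_filter.2 ⟨Finset.mem_Icc.2
      ⟨fun i => by have := key i; show -(r:ℤ) ≤ z i; omega,
        fun i => by have := key i; show z i ≤ (r:ℤ); omega⟩, h⟩

lemma sum_range_choose' (r i : ℕ) : ∑ j ∈ range r, j.choose i = r.choose (i+1) := by
  induction r with
  | zero => simp
  | succ r ih => rw [Finset.sum_range_succ, ih, Nat.choose_succ_succ, Nat.add_comm]


lemma fiber_card (m r : ℕ) (k : ℤ) (hk : k.natAbs ≤ r) :
    ((ballF (m+1) r).filter (fun z => z 0 = k)).card = (ballF m (r - k.natAbs)).card := by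
  apply Finset.card_bij (fun z _ => Fin.tail z)
  · intro z hz
    rw [Finset.mem_filter, mem_ballF] at hz
    obtain ⟨hz1, hz0⟩ := hz
    rw [Fin.sum_univ_succ, hz0] at hz1
    rw [mem_ballF]
    simp only [Fin.tail]
    omega
  · intro a ha b hb hab
    rw [Finset.mem_filter] at ha hb
    calc a = Fin.cons (a 0) (Fin.tail a) := (Fin.cons_self_tail a).symm
    _ = Fin.cons (b 0) (Fin.tail b) := by rw [ha.2, hb.2, hab]
    _ = b := Fin.cons_self_tail b
  · intro t ht
    rw [mem_ballF] at ht
    refine ⟨Fin.cons k t, Finset.mem_filter.2 ⟨mem_ballF.2 ?_, rfl⟩,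
      by rfl⟩
    rw [Fin.sum_univ_succ, Fin.cons_zero]
    simp only [Fin.cons_succ]
    omega

lemma ballF_card_succ (m r : ℕ) :
    (ballF (m+1) r).card = ∑ k ∈ Finset.Icc (-(r:ℤ)) (r:ℤ), (ballF m (r - k.natAbs)).card := by
  have H : ∀ z ∈ ballF (m+1) r, z 0 ∈ Finset.Icc (-(r:ℤ)) (r:ℤ) := by
    intro z hz
    rw [mem_ballF] at hz
    have : (z 0).natAbs ≤ r := le_trans
      (Finset.single_le_sum (f := fun j => (z j).natAbs) (fun j _ => Nat.zero_le _)
        (Finset.mem_univ 0)) hz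
    rw [Finset.mem_Icc]; omega
  rw [Finset.card_eq_sum_card_fiberwise (f := fun z => z 0)
    (s := ballF (m+1) r) (t := Finset.Icc (-(r:ℤ)) (r:ℤ)) (fun z hz => H z hz)]
  refine Finset.sum_congr rfl fun k hk => ?_
  have hk' : k.natAbs ≤ r := by rw [Finset.mem_Icc] at hk; omega
  exact fiber_card m r k hk' 

lemma sum_Icc_abs (n : ℕ) (g : ℕ → ℕ) :
    ∑ k ∈ Finset.Icc (-(n:ℤ)) (n:ℤ), g k.natAbs = g 0 + 2 * ∑ j ∈ Finset.Icc 1 n, g j := by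
  induction n with
  | zero => simp
  | succ n ih =>
    have h1 : Finset.Icc (-((n:ℤ)+1)) ((n:ℤ)+1) =
        insert (-((n:ℤ)+1)) (insert ((n:ℤ)+1) (Finset.Icc (-(n:ℤ)) (n:ℤ))) := by
      ext k
      simp only [Finset.mem_Icc, Finset.mem_insert]
      omega
    have h2 : (-((n:ℤ)+1)) ∉ insert ((n:ℤ)+1) (Finset.Icc (-(n:ℤ)) (n:ℤ)) := by
      simp only [Finset.mem_Icc, Finset.mem_insert]
      omega
    have h3 : ((n:ℤ)+1) ∉ Finset.Icc (-(n:ℤ)) (n:ℤ) := by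
      simp only [Finset.mem_Icc]
      omega
    push_cast
    rw [h1, Finset.sum_insert h2, Finset.sum_insert h3, ih,
      Finset.sum_Icc_succ_top (Nat.le_add_left 1 n)]
    have h4 : ((-((n:ℤ)+1)).natAbs) = n + 1 := by omega
    have h5 : (((n:ℤ)+1).natAbs) = n + 1 := by omega
    rw [h4, h5]
    ring

lemma sum_Icc_sub (r : ℕ) (f : ℕ → ℕ) :
    ∑ j ∈ Finset.Icc 1 r, f (r - j) = ∑ j ∈ Finset.range r, f j := by
  refine Finset.sum_nbij' (fun j => r - j) (fun j => r - j) ?_ ?_ ?_ ?_ ?_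
  · intro a ha; rw [Finset.mem_Icc] at ha; show r - a ∈ Finset.range r
    rw [Finset.mem_range]; omega
  · intro a ha; rw [Finset.mem_range] at ha; show r - a ∈ Finset.Icc 1 r
    rw [Finset.mem_Icc]; omega
  · intro a ha; rw [Finset.mem_Icc] at ha; show r - (r - a) = a; omega
  · intro a ha; rw [Finset.mem_range] at ha; show r - (r - a) = a; omega
  · intro a _; rfl

lemma formula_succ (m r : ℕ) :
    ∑ i ∈ range (m+2), 2^i * (m+1).choose i * r.choose i
      = (∑ i ∈ range (m+1), 2^i * m.choose i * r.choose i)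
        + 2 * ∑ i ∈ range (m+1), 2^i * m.choose i * r.choose (i+1) := by
  rw [Finset.sum_range_succ' (fun i => 2^i * (m+1).choose i * r.choose i) (m+1)]
  have h1 : ∀ i, 2^(i+1) * (m+1).choose (i+1) * r.choose (i+1)
      = 2^(i+1) * m.choose (i+1) * r.choose (i+1) + 2 * (2^i * m.choose i * r.choose (i+1)) := by
    intro i
    rw [Nat.choose_succ_succ]
    ring
  rw [Finset.sum_congr rfl (fun i _ => h1 i), Finset.sum_add_distrib]
  have h2 : (∑ i ∈ range (m+1), 2^(i+1) * m.choose (i+1) * r.choose (i+1))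
      + 2^0 * m.choose 0 * r.choose 0
      = ∑ i ∈ range (m+1), 2^i * m.choose i * r.choose i := by
    rw [← Finset.sum_range_succ' (fun i => 2^i * m.choose i * r.choose i) (m+1),
      Finset.sum_range_succ]
    simp [Nat.choose_succ_self]
  rw [← Finset.mul_sum]
  simp only [Nat.choose_zero_right] at h2 ⊢
  omega

lemma ballF_card (m : ℕ) : ∀ r, (ballF m r).card
    = ∑ i ∈ range (m+1), 2^i * m.choose i * r.choose i := by
  induction m with
  | zero =>
    intro r
    have h : ballF 0 r = Finset.univ := by
      ext z
      simp only [mem_ballF, Finset.mem_univ, iff_true]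
      simp
    rw [h]
    simp
  | succ m ih =>
    intro r
    have hswap : ∑ j ∈ range r, ∑ i ∈ range (m+1), 2^i * m.choose i * j.choose i
        = ∑ i ∈ range (m+1), 2^i * m.choose i * r.choose (i+1) := by
      rw [Finset.sum_comm]
      refine Finset.sum_congr rfl fun i _ => ?_
      rw [← Finset.mul_sum, sum_range_choose']
    rw [ballF_card_succ, sum_Icc_abs r (fun t => (ballF m (r - t)).card),
      sum_Icc_sub r (fun j => (ballF m j).card)]
    rw [Nat.sub_zero, ih r, Finset.sum_congr rfl (fun j _ => ih j), hswap]
    exact (formula_succ m r).symm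

theorem stmt15 (m r : ℕ) (x : Fin m → ℤ) :
    Set.ncard {y : Fin m → ℤ | ∑ i, (x i - y i).natAbs ≤ r} =
      ∑ i ∈ Finset.range (m + 1), 2 ^ i * Nat.choose m i * Nat.choose r i := by
  have hset : {y : Fin m → ℤ | ∑ i, (x i - y i).natAbs ≤ r}
      = ↑((ballF m r).image (fun z => x - z)) := by
    ext y
    simp only [Set.mem_setOf_eq, Finset.coe_image, Set.mem_image, Finset.mem_coe, mem_ballF]
    constructor
    · intro h
      exact ⟨x - y, by simpa using h, by abel⟩
    · rintro ⟨z, hz, rfl⟩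
      simpa using hz
  rw [hset, Set.ncard_coe_finset,
    Finset.card_image_of_injective _ (fun a b hab => by simpa [sub_right_injective] using sub_right_injective hab),
    ballF_card]
end

section
/- Let L₀ ⊆ Z^m be a subgroup (lattice) of finite index N with minimum Manhattan distance d_s(L₀) > 2t among distinct points, and suppose L₀ ⊆ A_{m-1} = {u ∈ Z^m : Σ u_i = 0}. Define L = ⋃_{k∈Z} (L₀ + k(2t+1)e₁) where e₁ = (1,0,...,0). Then L is a subgroup of Z^m with minimum Manhattan distance at least 2t+1 between distinct points, and the index of L in Z^m equals (2t+1)·[A_{m-1} : L₀]. -/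
/-- The coordinate-sum homomorphism on `ℤ^m`. -/
def sumHom (m : ℕ) : (Fin m → ℤ) →+ ℤ where
  toFun u := ∑ i, u i
  map_zero' := by simp
  map_add' a b := by simp [Finset.sum_add_distrib]

/-- The root lattice `A_{m-1}` of integer vectors with zero coordinate sum. -/
def zeroSumLattice (m : ℕ) : AddSubgroup (Fin m → ℤ) := (sumHom m).ker

theorem stmt19 (m t : ℕ) (hm : 0 < m) (L0 : AddSubgroup (Fin m → ℤ))
    (hsub : L0 ≤ zeroSumLattice m)
    (hN : L0.relIndex (zeroSumLattice m) ≠ 0)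
    (hdist : ∀ u ∈ L0, ∀ v ∈ L0, u ≠ v → 2 * t < ∑ i, (u i - v i).natAbs) :
    ∃ L : AddSubgroup (Fin m → ℤ),
      (L : Set (Fin m → ℤ)) =
        {v | ∃ u ∈ L0, ∃ k : ℤ,
          v = u + k • ((2 * (t : ℤ) + 1) • Pi.single (⟨0, hm⟩ : Fin m) (1 : ℤ))} ∧
      (∀ u ∈ L, ∀ v ∈ L, u ≠ v → 2 * t + 1 ≤ ∑ i, (u i - v i).natAbs) ∧
      L.index = (2 * t + 1) * L0.relIndex (zeroSumLattice m) := by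
  set c : ℤ := 2 * (t : ℤ) + 1 with hc
  set e1 : Fin m → ℤ := Pi.single (⟨0, hm⟩ : Fin m) (1 : ℤ) with he1
  set e : Fin m → ℤ := c • e1 with he
  have hse1 : sumHom m e1 = 1 := by
    simp [sumHom, he1, Finset.sum_pi_single]
  have hmul : ∀ (k : ℤ) (v : Fin m → ℤ), sumHom m (k • v) = k * sumHom m v := by
    intro k v
    simp [sumHom, Finset.mul_sum]
  have hse : sumHom m e = c := by
    rw [he, hmul, hse1, mul_one]
  set L : AddSubgroup (Fin m → ℤ) := L0 ⊔ AddSubgroup.zmultiples e with hL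
  have hmem : ∀ x, x ∈ L ↔ ∃ u ∈ L0, ∃ k : ℤ, x = u + k • e := by
    intro x
    rw [hL, AddSubgroup.mem_sup]
    constructor
    · rintro ⟨y, hy, z, hz, rfl⟩
      obtain ⟨k, rfl⟩ := AddSubgroup.mem_zmultiples_iff.mp hz
      exact ⟨y, hy, k, rfl⟩
    · rintro ⟨u, hu, k, rfl⟩
      exact ⟨u, hu, k • e, AddSubgroup.zsmul_mem _ (AddSubgroup.mem_zmultiples e) k, rfl⟩
  refine ⟨L, ?_, ?_, ?_⟩
  · ext x; simpa using hmem x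
  · -- distance bound
    intro x hx y hy hxy
    obtain ⟨u, hu, k, hk⟩ := (hmem _).mp (AddSubgroup.sub_mem L hx hy)
    have hsumle : (sumHom m (x - y)).natAbs ≤ ∑ i, (x i - y i).natAbs := by
      have h : |∑ i, (x i - y i)| ≤ ∑ i, |x i - y i| :=
        Finset.abs_sum_le_sum_abs _ _
      have hs' : sumHom m (x - y) = ∑ i, (x i - y i) := by
        simp [sumHom]
      rw [hs']
      have h2 : (((∑ i, (x i - y i)).natAbs : ℤ)) ≤ ∑ i, ((x i - y i).natAbs : ℤ) := by
        simpa [Int.natCast_natAbs] using h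
      exact_mod_cast h2
    rcases eq_or_ne k 0 with rfl | hk0
    · simp only [zero_smul, add_zero] at hk
      have hne : x - y ≠ (0 : Fin m → ℤ) := sub_ne_zero.mpr hxy
      have := hdist (x - y) (hk ▸ hu) 0 (AddSubgroup.zero_mem _) hne
      have h2 : ∑ i, ((x - y) i - (0 : Fin m → ℤ) i).natAbs = ∑ i, (x i - y i).natAbs := by
        simp
      omega
    · have hs : sumHom m (x - y) = k * c := by
        have h0 : sumHom m u = 0 := hsub hu
        rw [hk, map_add, h0, zero_add, hmul, hse]
      have h1 : (2 * t + 1 : ℕ) ≤ (k * c).natAbs := by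
        have : c.natAbs = 2 * t + 1 := by omega
        rw [Int.natAbs_mul, this]
        have : 1 ≤ k.natAbs := by omega
        nlinarith
      rw [hs] at hsumle
      omega
  · -- index
    have hLK : L ≤ AddSubgroup.comap (sumHom m) (AddSubgroup.zmultiples c) := by
      rw [hL, sup_le_iff]
      constructor
      · intro x hx
        have h0 : sumHom m x = 0 := hsub hx
        simp [AddSubgroup.mem_comap, h0, AddSubgroup.zero_mem]
      · intro x hx
        obtain ⟨k, rfl⟩ := AddSubgroup.mem_zmultiples_iff.mp hx
        simp only [AddSubgroup.mem_comap, map_zsmul, hse]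
        exact AddSubgroup.zsmul_mem _ (AddSubgroup.mem_zmultiples c) k
    set K := AddSubgroup.comap (sumHom m) (AddSubgroup.zmultiples c) with hK
    have hsurj : Function.Surjective (sumHom m) := by
      intro n
      exact ⟨n • e1, by rw [hmul, hse1, mul_one]⟩
    have hKind : K.index = 2 * t + 1 := by
      rw [hK, AddSubgroup.index_comap_of_surjective _ hsurj, Int.index_zmultiples]
      omega
    have hKsup : K = zeroSumLattice m ⊔ L := by
      apply le_antisymm
      · intro x hx
        rw [AddSubgroup.mem_comap] at hx
        obtain ⟨k, hk⟩ := AddSubgroup.mem_zmultiples_iff.mp hx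
        rw [AddSubgroup.mem_sup]
        refine ⟨x - k • e, ?_, k • e, ?_, by abel⟩
        · have hke : sumHom m (k • e) = k * c := by
            rw [hmul, hse]
          have : sumHom m (x - k • e) = 0 := by
            rw [map_sub, hke, ← hk, smul_eq_mul, sub_self]
          exact this
        · have heL : e ∈ L := (le_sup_right : AddSubgroup.zmultiples e ≤ L)
            (AddSubgroup.mem_zmultiples e)
          exact AddSubgroup.zsmul_mem _ heL k
      · rw [sup_le_iff]
        refine ⟨?_, hLK⟩
        intro x hx
        have h0 : sumHom m x = 0 := hx
        simp [hK, AddSubgroup.mem_comap, h0, AddSubgroup.zero_mem]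
    have hinf : L ⊓ zeroSumLattice m = L0 := by
      apply le_antisymm
      · rintro x ⟨hx1, hx2⟩
        obtain ⟨u, hu, k, rfl⟩ := (hmem _).mp hx1
        have h0 : sumHom m u = 0 := hsub hu
        have hsx : sumHom m (u + k • e) = 0 := hx2
        rw [map_add, h0, zero_add] at hsx
        rw [hmul, hse] at hsx
        have hk0 : k = 0 := by
          rcases mul_eq_zero.mp hsx with h | h
          · exact h
          · omega
        simpa [hk0] using hu
      · exact le_inf (le_sup_left) hsub
    have hrel : L.relIndex K = L0.relIndex (zeroSumLattice m) := by
      rw [hKsup, AddSubgroup.relIndex_sup_right, ← AddSubgroup.inf_relIndex_right, hinf]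
    have := AddSubgroup.relIndex_mul_index hLK
    rw [hrel, hKind] at this
    rw [← this]
    ring
end
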